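/- For every n ∈ ℕ^p, the function assigning to a polymatroid 𝒫 on [p] with cage m the value i_{n+ℝ_{≤0}^p}(𝒫) ∈ {0,1}, which equals 1 if B(𝒫) ∩ (n + ℝ_{≤0}^p) ≠ ∅ (equivalently, if there exists w ∈ B(𝒫) with w_j ≤ n_j for all j) and 0 otherwise, is valuative: for any polymatroids 𝒫_1,…,𝒫_k on [p] with cage m and integers a_1,…,a_k with Σ_{i=1}^{k} a_i · 1_{B(𝒫_i)}(v) = 0 for all v ∈ ℝ^p, one has Σ_{i=1}^{k} a_i · i_{n+ℝ_{≤0}^p}(𝒫_i) = 0. -/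

import Mathlib

open scoped BigOperators

attribute [local instance] Classical.propDecidable

namespace CavePaper

variable {p : ℕ}

/-- `rk` is the rank function of a polymatroid on `[p]` with cage `m`:
normalized, monotone, submodular, and `rk {i} ≤ m i` for all `i`. -/
def IsPolymatroid (m : Fin p → ℕ) (rk : Finset (Fin p) → ℕ) : Prop :=
  rk ∅ = 0 ∧
    (∀ J₁ J₂ : Finset (Fin p), J₁ ⊆ J₂ → rk J₁ ≤ rk J₂) ∧
    (∀ J₁ J₂ : Finset (Fin p), rk (J₁ ∩ J₂) + rk (J₁ ∪ J₂) ≤ rk J₁ + rk J₂) ∧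
    (∀ i : Fin p, rk {i} ≤ m i)

/-- An integer point lies in the independence polytope `I(𝒫)`. -/
def inIndep (rk : Finset (Fin p) → ℕ) (v : Fin p → ℤ) : Prop :=
  (∀ i, 0 ≤ v i) ∧ ∀ J : Finset (Fin p), ∑ j ∈ J, v j ≤ (rk J : ℤ)

/-- An integer point lies in the base polytope `B(𝒫)`. -/
def inBase (rk : Finset (Fin p) → ℕ) (v : Fin p → ℤ) : Prop :=
  inIndep rk v ∧ ∑ i, v i = (rk Finset.univ : ℤ)

/-- The indicator function `1_𝒫` of the base polytope, at integer points. -/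
noncomputable def baseInd (rk : Finset (Fin p) → ℕ) (v : Fin p → ℤ) : ℤ :=
  if inBase rk v then 1 else 0

/-- `max_{i<j} 1_𝒫(n - e_i + e_j)`. -/
noncomputable def cmax (rk : Finset (Fin p) → ℕ) (n : Fin p → ℕ) (i : Fin p) : ℤ :=
  if ∃ j, i < j ∧ inBase rk
      (fun k => (n k : ℤ) - (if k = i then 1 else 0) + (if k = j then 1 else 0))
    then 1 else 0

/-- The cave polynomial of a polymatroid: the expansion of
`∑_{n ∈ ℕ^p, |n| = rk(𝒫)} 1_𝒫(n) ∏_{i=1}^{p-1} (1 - max_{i<j} 1_𝒫(n-e_i+e_j) tᵢ⁻¹) tⁿ`.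
Each factor `(1 - cᵢ tᵢ⁻¹) tᵢ^{nᵢ}` is written as `tᵢ^{nᵢ} - cᵢ tᵢ^{nᵢ-1}`, which is
legitimate since `cᵢ ≠ 0` forces `nᵢ ≥ 1`; the factor for the last index is `tᵢ^{nᵢ}`. -/
noncomputable def cavePoly (rk : Finset (Fin p) → ℕ) : MvPolynomial (Fin p) ℤ :=
  ∑ n ∈ Finset.Nat.antidiagonalTuple p (rk Finset.univ),
    MvPolynomial.C (baseInd rk (fun i => (n i : ℤ))) *
      ∏ i : Fin p,
        if (i : ℕ) < p - 1 then
          MvPolynomial.X i ^ (n i) -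
            MvPolynomial.C (cmax rk n i) * MvPolynomial.X i ^ (n i - 1)
        else MvPolynomial.X i ^ (n i)

/-- A set `S ⊆ ℤ^q` is M-convex: it is nonempty, finite, and satisfies the
symmetric exchange property. -/
def MConvex {q : ℕ} (S : Set (Fin q → ℤ)) : Prop :=
  S.Nonempty ∧ S.Finite ∧
    ∀ u ∈ S, ∀ v ∈ S, ∀ i, v i < u i →
      ∃ j, u j < v j ∧
        (fun k => u k - (if k = i then 1 else 0) + (if k = j then 1 else 0)) ∈ S

/-- The Möbius function `μ_𝒫 : ℤ^p → ℤ` of a polymatroid: `0` outside `I(𝒫)`,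
`1` on `B(𝒫)`, and `1 - ∑_{w ∈ (n + ℤ_{>0}^p) ∩ I(𝒫)} μ_𝒫(w)` on `I(𝒫) \ B(𝒫)`.
(Every integer point of `I(𝒫)` lies in the box `0 ≤ w i ≤ rk {i}`; the redundant
condition `∑ n < ∑ w` — automatic for `p ≥ 1` — ensures termination.) -/
noncomputable def mobius (rk : Finset (Fin p) → ℕ) (n : Fin p → ℤ) : ℤ :=
  if inIndep rk n then
    if inBase rk n then 1
    else
      1 - ∑ w ∈ ((Finset.Icc (fun _ => (0 : ℤ)) (fun i => (rk {i} : ℤ))).filter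
            (fun w => (∀ i, n i < w i) ∧ (∑ i, n i) < (∑ i, w i) ∧ inIndep rk w)).attach,
          mobius rk w.1
  else 0
termination_by ((rk Finset.univ : ℤ) - ∑ i, n i).toNat
decreasing_by
  have hm := w.2
  simp only [Finset.mem_filter] at hm
  have h2 : (∑ i, w.1 i) ≤ (rk Finset.univ : ℤ) := by
    simpa using hm.2.2.2.2 Finset.univ
  have _h1 : (∑ i, n i) < ∑ i, w.1 i := hm.2.2.1
  omega

/-- The base polytope `B(𝒫) ⊆ ℝ^p`. -/
def BaseSet (rk : Finset (Fin p) → ℕ) : Set (Fin p → ℝ) :=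
  {v | (∀ i, 0 ≤ v i) ∧ (∑ i, v i = (rk Finset.univ : ℝ)) ∧
    ∀ J : Finset (Fin p), ∑ j ∈ J, v j ≤ (rk J : ℝ)}

/-- The rank function `rk_S(J) = max_{u ∈ S} ∑_{j∈J} u_j` of a (finite, nonempty)
M-convex set `S ⊆ ℕ^p`. -/
noncomputable def rkOf (S : Set (Fin p → ℤ)) (J : Finset (Fin p)) : ℕ :=
  sSup ((fun u => (∑ j ∈ J, u j).toNat) '' S)


private lemma exists_eps {k : ℕ} (b A : Fin k → ℝ) (s : ℝ) :
    ∃ ε : ℝ, 0 < ε ∧ ∀ i, (s < b i → s + ε ≤ b i) ∧ (s < A i → s + ε < A i) := by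
  classical
  set c : Fin k → ℝ := fun i =>
    min (if s < b i then b i - s else 1) (if s < A i then (A i - s) / 2 else 1) with hc
  have hcpos : ∀ i, 0 < c i := by
    intro i
    rw [hc]
    refine lt_min ?_ ?_ <;> split_ifs with h <;> linarith
  have hGne : (1 : ℝ) ∈ insert (1 : ℝ) (Finset.univ.image c) := Finset.mem_insert_self _ _
  refine ⟨(insert (1 : ℝ) (Finset.univ.image c)).min' (Finset.insert_nonempty _ _), ?_, ?_⟩
  · rw [Finset.lt_min'_iff]
    intro x hx
    rcases Finset.mem_insert.mp hx with rfl | hx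
    · norm_num
    · obtain ⟨i, _, rfl⟩ := Finset.mem_image.mp hx
      exact hcpos i
  · intro i
    have hεle : (insert (1 : ℝ) (Finset.univ.image c)).min' (Finset.insert_nonempty _ _) ≤ c i :=
      Finset.min'_le _ _ (Finset.mem_insert_of_mem (Finset.mem_image_of_mem c (Finset.mem_univ i)))
    constructor
    · intro h
      have h1 : c i ≤ b i - s := by
        rw [hc]
        calc min _ _ ≤ _ := min_le_left _ _
        _ = b i - s := if_pos h
      linarith
    · intro h
      have h1 : c i ≤ (A i - s) / 2 := by
        rw [hc]
        calc min _ _ ≤ _ := min_le_right _ _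
        _ = (A i - s) / 2 := if_pos h
      linarith

private lemma slice {k : ℕ} (S : Fin k → Set ℝ) (a : Fin k → ℤ)
    (hconv : ∀ i, Convex ℝ (S i)) (hcomp : ∀ i, IsCompact (S i))
    (hrel : ∀ t : ℝ, ∑ i, a i * (if t ∈ S i then (1 : ℤ) else 0) = 0) :
    ∑ i, a i * (if (S i).Nonempty then (1 : ℤ) else 0) = 0 := by
  classical
  have star : ∀ s : ℝ,
      ∑ i, a i * (if (S i).Nonempty ∧ sSup (S i) = s then (1 : ℤ) else 0) = 0 := by
    intro s
    obtain ⟨ε, hεpos, hεprop⟩ := exists_eps (fun i => sSup (S i)) (fun i => sInf (S i)) s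
    have hptwise : ∀ i, (if s ∈ S i then (1 : ℤ) else 0) - (if s + ε ∈ S i then (1 : ℤ) else 0)
        = if (S i).Nonempty ∧ sSup (S i) = s then (1 : ℤ) else 0 := by
      intro i
      by_cases hsf : s ∈ S i
      · have hsb : s ≤ sSup (S i) := le_csSup (hcomp i).bddAbove hsf
        rcases eq_or_lt_of_le hsb with heq | hlt
        · have hnotin : s + ε ∉ S i := by
            intro hmem
            have := le_csSup (hcomp i).bddAbove hmem
            rw [← heq] at this
            linarith
          rw [if_pos hsf, if_neg hnotin, if_pos ⟨⟨s, hsf⟩, heq.symm⟩]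
          norm_num
        · have hin : s + ε ∈ S i := by
            have hsup : sSup (S i) ∈ S i := (hcomp i).sSup_mem ⟨s, hsf⟩
            have hle : s + ε ≤ sSup (S i) := (hεprop i).1 hlt
            exact (hconv i).ordConnected.out hsf hsup ⟨by linarith, hle⟩
          rw [if_pos hsf, if_pos hin,
            if_neg (by rintro ⟨_, hsups⟩; rw [hsups] at hlt; linarith)]
          norm_num
      · by_cases h2m : s + ε ∈ S i
        · exfalso
          have hne : (S i).Nonempty := ⟨_, h2m⟩
          by_cases hA : sInf (S i) ≤ s
          · exact hsf ((hconv i).ordConnected.out ((hcomp i).sInf_mem hne) h2m ⟨hA, by linarith⟩)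
          · push_neg at hA
            have h3 := (hεprop i).2 hA
            have h4 : sInf (S i) ≤ s + ε := csInf_le (hcomp i).bddBelow h2m
            linarith
        · rw [if_neg hsf, if_neg h2m, if_neg ?_]
          · norm_num
          · rintro ⟨hne, hsup⟩
            exact hsf (hsup ▸ (hcomp i).sSup_mem hne)
    have hstep : ∑ i, a i * (if (S i).Nonempty ∧ sSup (S i) = s then (1 : ℤ) else 0)
        = ∑ i, (a i * (if s ∈ S i then (1 : ℤ) else 0)
            - a i * (if s + ε ∈ S i then (1 : ℤ) else 0)) :=
      Finset.sum_congr rfl fun i _ => by rw [← hptwise i]; ring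
    rw [hstep, Finset.sum_sub_distrib, hrel s, hrel (s + ε), sub_self]
  set T : Finset ℝ := Finset.univ.image (fun i => sSup (S i)) with hT
  have h0 : ∑ i, ∑ s ∈ T, a i * (if (S i).Nonempty ∧ sSup (S i) = s then (1 : ℤ) else 0) = 0 := by
    rw [Finset.sum_comm]
    exact Finset.sum_eq_zero fun s _ => star s
  calc ∑ i, a i * (if (S i).Nonempty then (1 : ℤ) else 0)
      = ∑ i, ∑ s ∈ T, a i * (if (S i).Nonempty ∧ sSup (S i) = s then (1 : ℤ) else 0) := by
        refine Finset.sum_congr rfl fun i _ => ?_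
        rw [← Finset.mul_sum]
        congr 1
        by_cases hne : (S i).Nonempty
        · rw [if_pos hne]
          have hcalc : ∑ s ∈ T, (if (S i).Nonempty ∧ sSup (S i) = s then (1 : ℤ) else 0)
              = ∑ s ∈ T, (if sSup (S i) = s then (1 : ℤ) else 0) :=
            Finset.sum_congr rfl fun s _ => by simp [hne]
          rw [hcalc, Finset.sum_ite_eq,
            if_pos (Finset.mem_image_of_mem _ (Finset.mem_univ i))]
        · rw [if_neg hne]
          exact (Finset.sum_eq_zero fun s _ =>
            if_neg (by rintro ⟨h, _⟩; exact hne h)).symm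
    _ = 0 := h0

private lemma fiber_convex {q : ℕ} {K : Set (Fin (q + 1) → ℝ)} (hK : Convex ℝ K)
    (y : Fin q → ℝ) : Convex ℝ {t : ℝ | Fin.snoc y t ∈ K} := by
  intro t₁ ht₁ t₂ ht₂ c₁ c₂ hc₁ hc₂ hcsum
  show Fin.snoc y (c₁ • t₁ + c₂ • t₂) ∈ K
  have h := hK ht₁ ht₂ hc₁ hc₂ hcsum
  have heq : c₁ • (Fin.snoc y t₁ : Fin (q + 1) → ℝ) + c₂ • (Fin.snoc y t₂ : Fin (q + 1) → ℝ)
      = (Fin.snoc y (c₁ • t₁ + c₂ • t₂) : Fin (q + 1) → ℝ) := by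
    funext j
    refine Fin.lastCases ?_ (fun j' => ?_) j
    · simp [Fin.snoc_last]
    · simp only [Pi.add_apply, Pi.smul_apply, smul_eq_mul, Fin.snoc_castSucc]
      linear_combination (y j') * hcsum
  rw [← heq]
  exact h

private lemma snoc_continuous {q : ℕ} (y : Fin q → ℝ) :
    Continuous (fun t : ℝ => (Fin.snoc y t : Fin (q + 1) → ℝ)) := by
  apply continuous_pi
  intro i
  refine Fin.lastCases ?_ (fun j => ?_) i
  · simpa [Fin.snoc_last] using continuous_id'
  · simp only [Fin.snoc_castSucc]
    exact continuous_const

private lemma fiber_compact {q : ℕ} {K : Set (Fin (q + 1) → ℝ)} (hK : IsCompact K)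
    (y : Fin q → ℝ) : IsCompact {t : ℝ | Fin.snoc y t ∈ K} := by
  have hclosed : IsClosed {t : ℝ | Fin.snoc y t ∈ K} :=
    IsClosed.preimage (snoc_continuous y) hK.isClosed
  have hsub : {t : ℝ | Fin.snoc y t ∈ K} ⊆ (fun v : Fin (q + 1) → ℝ => v (Fin.last q)) '' K :=
    fun t ht => ⟨Fin.snoc y t, ht, by simp⟩
  exact IsCompact.of_isClosed_subset (hK.image (continuous_apply _)) hclosed hsub

/-- Projection forgetting the last coordinate. -/
private def proj {q : ℕ} (K : Set (Fin (q + 1) → ℝ)) : Set (Fin q → ℝ) :=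
  (fun v j => v (Fin.castSucc j)) '' K

private lemma proj_convex {q : ℕ} {K : Set (Fin (q + 1) → ℝ)} (hK : Convex ℝ K) :
    Convex ℝ (proj K) := by
  have : proj K = (LinearMap.funLeft ℝ ℝ Fin.castSucc) '' K := rfl
  rw [this]
  exact hK.linear_image _

private lemma proj_compact {q : ℕ} {K : Set (Fin (q + 1) → ℝ)} (hK : IsCompact K) :
    IsCompact (proj K) :=
  hK.image (continuous_pi fun j => continuous_apply _)

private lemma mem_proj_iff {q : ℕ} {K : Set (Fin (q + 1) → ℝ)} {y : Fin q → ℝ} :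
    y ∈ proj K ↔ {t : ℝ | Fin.snoc y t ∈ K}.Nonempty := by
  constructor
  · rintro ⟨v, hv, rfl⟩
    refine ⟨v (Fin.last q), ?_⟩
    show Fin.snoc (fun j => v (Fin.castSucc j)) (v (Fin.last q)) ∈ K
    have hv' : (Fin.snoc (fun j => v (Fin.castSucc j)) (v (Fin.last q)) : Fin (q + 1) → ℝ) = v :=
      Fin.snoc_init_self v
    rw [hv']
    exact hv
  · rintro ⟨t, ht⟩
    exact ⟨Fin.snoc y t, ht, funext fun j => by simp⟩

/-- Euler-characteristic valuativity for compact convex sets: a vanishing integer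
combination of indicators has vanishing combination of nonemptiness indicators. -/
private lemma chi {k : ℕ} (a : Fin k → ℤ) :
    ∀ (q : ℕ) (K : Fin k → Set (Fin q → ℝ)),
      (∀ i, Convex ℝ (K i)) → (∀ i, IsCompact (K i)) →
      (∀ v : Fin q → ℝ, ∑ i, a i * (if v ∈ K i then (1 : ℤ) else 0) = 0) →
      ∑ i, a i * (if (K i).Nonempty then (1 : ℤ) else 0) = 0 := by
  intro q
  induction q with
  | zero =>
    intro K hconv hcomp hrel
    have h := hrel (fun j => j.elim0)
    calc ∑ i, a i * (if (K i).Nonempty then (1 : ℤ) else 0)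
        = ∑ i, a i * (if (fun j : Fin 0 => j.elim0) ∈ K i then (1 : ℤ) else 0) := by
          refine Finset.sum_congr rfl fun i _ => ?_
          congr 1
          refine if_congr ⟨?_, fun h' => ⟨_, h'⟩⟩ rfl rfl
          rintro ⟨x, hx⟩
          have hxeq : (fun j : Fin 0 => (j.elim0 : ℝ)) = x := funext fun j => j.elim0
          rw [hxeq]
          exact hx
      _ = 0 := h
  | succ q ih =>
    intro K hconv hcomp hrel
    have hrel' : ∀ y : Fin q → ℝ, ∑ i, a i * (if y ∈ proj (K i) then (1 : ℤ) else 0) = 0 := by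
      intro y
      have hs := slice (fun i => {t : ℝ | Fin.snoc y t ∈ K i}) a
        (fun i => fiber_convex (hconv i) y) (fun i => fiber_compact (hcomp i) y)
        (fun t => by simpa using hrel (Fin.snoc y t))
      calc ∑ i, a i * (if y ∈ proj (K i) then (1 : ℤ) else 0)
          = ∑ i, a i * (if ({t : ℝ | Fin.snoc y t ∈ K i}).Nonempty then (1 : ℤ) else 0) :=
            Finset.sum_congr rfl fun i _ => by
              congr 1
              exact if_congr mem_proj_iff rfl rfl
        _ = 0 := hs
    have h := ih (fun i => proj (K i)) (fun i => proj_convex (hconv i))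
      (fun i => proj_compact (hcomp i)) hrel'
    calc ∑ i, a i * (if (K i).Nonempty then (1 : ℤ) else 0)
        = ∑ i, a i * (if (proj (K i)).Nonempty then (1 : ℤ) else 0) :=
          Finset.sum_congr rfl fun i _ => by
            congr 1
            exact (if_congr Set.image_nonempty rfl rfl).symm
      _ = 0 := h


/-- For every `n ∈ ℕ^p`, the function
`𝒫 ↦ i_{n + ℝ_{≤0}^p}(𝒫)` — equal to `1` if there exists `w ∈ B(𝒫)` with `w ≤ n`
coordinatewise and `0` otherwise — is valuative. -/
theorem shifted_indicator_valuative
    (p : ℕ) (hp : 1 ≤ p) (m : Fin p → ℕ) (n : Fin p → ℕ) (k : ℕ)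
    (P : Fin k → Finset (Fin p) → ℕ) (hP : ∀ i, IsPolymatroid m (P i))
    (a : Fin k → ℤ)
    (hval : ∀ v : Fin p → ℝ,
      (∑ i, a i * (if v ∈ BaseSet (P i) then (1 : ℤ) else 0)) = 0) :
    (∑ i, a i * (if ∃ w ∈ BaseSet (P i), ∀ j, w j ≤ (n j : ℝ) then (1 : ℤ) else 0)) = 0 := by
  classical
  have hCconv : Convex ℝ {v : Fin p → ℝ | ∀ j, v j ≤ (n j : ℝ)} := by
    intro x hx y hy c₁ c₂ hc₁ hc₂ hsum
    intro j
    show c₁ * x j + c₂ * y j ≤ (n j : ℝ)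
    calc c₁ * x j + c₂ * y j ≤ c₁ * (n j : ℝ) + c₂ * (n j : ℝ) :=
          add_le_add (mul_le_mul_of_nonneg_left (hx j) hc₁)
            (mul_le_mul_of_nonneg_left (hy j) hc₂)
      _ = (n j : ℝ) := by rw [← add_mul, hsum, one_mul]
  have hBconv : ∀ i, Convex ℝ (BaseSet (P i)) := by
    intro i x hx y hy c₁ c₂ hc₁ hc₂ hsum
    obtain ⟨hx0, hxs, hxJ⟩ := hx
    obtain ⟨hy0, hys, hyJ⟩ := hy
    refine ⟨fun j => ?_, ?_, fun J => ?_⟩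
    · show 0 ≤ c₁ * x j + c₂ * y j
      have h1 := mul_nonneg hc₁ (hx0 j)
      have h2 := mul_nonneg hc₂ (hy0 j)
      linarith
    · calc ∑ j, (c₁ • x + c₂ • y) j = c₁ * ∑ j, x j + c₂ * ∑ j, y j := by
            simp [Finset.sum_add_distrib, Finset.mul_sum]
        _ = ((P i) Finset.univ : ℝ) := by rw [hxs, hys, ← add_mul, hsum, one_mul]
    · calc ∑ j ∈ J, (c₁ • x + c₂ • y) j = c₁ * ∑ j ∈ J, x j + c₂ * ∑ j ∈ J, y j := by
            simp [Finset.sum_add_distrib, Finset.mul_sum]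
        _ ≤ c₁ * ((P i) J : ℝ) + c₂ * ((P i) J : ℝ) :=
            add_le_add (mul_le_mul_of_nonneg_left (hxJ J) hc₁)
              (mul_le_mul_of_nonneg_left (hyJ J) hc₂)
        _ = ((P i) J : ℝ) := by rw [← add_mul, hsum, one_mul]
  have hCclosed : IsClosed {v : Fin p → ℝ | ∀ j, v j ≤ (n j : ℝ)} := by
    have : {v : Fin p → ℝ | ∀ j, v j ≤ (n j : ℝ)}
        = ⋂ j, {v : Fin p → ℝ | v j ≤ (n j : ℝ)} := by
      ext v; simp only [Set.mem_setOf_eq, Set.mem_iInter]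
    rw [this]
    exact isClosed_iInter fun j => isClosed_le (continuous_apply j) continuous_const
  have hBclosed : ∀ i, IsClosed (BaseSet (P i)) := by
    intro i
    have : BaseSet (P i) = (⋂ j, {v : Fin p → ℝ | 0 ≤ v j}) ∩
        ({v : Fin p → ℝ | ∑ j, v j = ((P i) Finset.univ : ℝ)} ∩
         ⋂ J : Finset (Fin p), {v : Fin p → ℝ | ∑ j ∈ J, v j ≤ ((P i) J : ℝ)}) := by
      ext v
      simp only [BaseSet, Set.mem_setOf_eq, Set.mem_inter_iff, Set.mem_iInter]
    rw [this]
    refine IsClosed.inter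
      (isClosed_iInter fun j => isClosed_le continuous_const (continuous_apply j))
      (IsClosed.inter
        (isClosed_eq (continuous_finset_sum _ fun j _ => continuous_apply j) continuous_const)
        (isClosed_iInter fun J =>
          isClosed_le (continuous_finset_sum _ fun j _ => continuous_apply j) continuous_const))
  have hsub : ∀ i, {v : Fin p → ℝ | v ∈ BaseSet (P i) ∧ ∀ j, v j ≤ (n j : ℝ)} ⊆
      Set.Icc (fun _ => (0 : ℝ)) (fun _ => ((P i) Finset.univ : ℝ)) := by
    intro i v hv
    obtain ⟨⟨h0, hsum, _⟩, _⟩ := hv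
    simp only [Set.mem_Icc, Pi.le_def]
    refine ⟨fun j => h0 j, fun j => ?_⟩
    have h1 := Finset.single_le_sum (f := v) (fun l _ => h0 l) (Finset.mem_univ j)
    rw [hsum] at h1
    exact h1
  have hKcomp : ∀ i, IsCompact ({v : Fin p → ℝ | v ∈ BaseSet (P i) ∧ ∀ j, v j ≤ (n j : ℝ)}) :=
    fun i => IsCompact.of_isClosed_subset isCompact_Icc ((hBclosed i).inter hCclosed) (hsub i)
  have hrel : ∀ v : Fin p → ℝ,
      ∑ i, a i * (if v ∈ {v : Fin p → ℝ | v ∈ BaseSet (P i) ∧ ∀ j, v j ≤ (n j : ℝ)}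
        then (1 : ℤ) else 0) = 0 := by
    intro v
    by_cases hv : ∀ j, v j ≤ (n j : ℝ)
    · calc ∑ i, a i * (if v ∈ {v : Fin p → ℝ | v ∈ BaseSet (P i) ∧ ∀ j, v j ≤ (n j : ℝ)}
            then (1 : ℤ) else 0)
          = ∑ i, a i * (if v ∈ BaseSet (P i) then (1 : ℤ) else 0) :=
            Finset.sum_congr rfl fun i _ =>
              congrArg (fun z => a i * z)
                (if_congr ⟨fun h => h.1, fun h => ⟨h, hv⟩⟩ rfl rfl)
        _ = 0 := hval v
    · exact Finset.sum_eq_zero fun i _ => by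
        rw [if_neg (fun h => hv h.2), mul_zero]
  have h := chi a p (fun i => {v : Fin p → ℝ | v ∈ BaseSet (P i) ∧ ∀ j, v j ≤ (n j : ℝ)})
    (fun i => (hBconv i).inter hCconv) hKcomp (fun v => by
      refine Eq.trans ?_ (hrel v)
      exact Finset.sum_congr rfl fun i _ =>
        congrArg (fun z => a i * z) (ite_congr rfl (fun _ => rfl) (fun _ => rfl)))
  calc (∑ i, a i * (if ∃ w ∈ BaseSet (P i), ∀ j, w j ≤ (n j : ℝ) then (1 : ℤ) else 0))
      = ∑ i, a i * (if ({v : Fin p → ℝ | v ∈ BaseSet (P i) ∧ ∀ j, v j ≤ (n j : ℝ)}).Nonempty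
          then (1 : ℤ) else 0) :=
        Finset.sum_congr rfl fun i _ => by
          refine congrArg (fun z => a i * z) (if_congr ⟨?_, ?_⟩ rfl rfl)
          · rintro ⟨w, hw1, hw2⟩
            exact ⟨w, hw1, hw2⟩
          · rintro ⟨w, hw1, hw2⟩
            exact ⟨w, hw1, hw2⟩
    _ = 0 := h


end CavePaper
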